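/- Let A = S + g·hᵀ and B = S + g·kᵀ be real n×n matrices in companion form. Suppose Z is a real symmetric positive semidefinite n×n matrix satisfying Π·S·Z·Π + Π·Z·Sᵀ·Π = 0, and let ξ = S·Z·g + Z·h. Assume ξ lies in the range of Z, that ⟨h−k, ξ⟩ > 0, and that ⟨ξ, Z⁺·ξ⟩ ≤ ⟨h−k, ξ⟩ (where Z⁺ is the Moore–Penrose pseudoinverse of Z). Define w = ⟨h−k, ξ⟩^{−1/2} · ξ. Then Z − w·wᵀ is positive semidefinite and the matrices X' = Z − w·wᵀ and Y' = w·wᵀ satisfy A·X' + X'·Aᵀ + B·Y' + Y'·Bᵀ = 0. -/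

import Mathlib

open Matrix

/-- The `n × n` shift matrix `S` with `S_{i,i+1} = 1` and all other entries `0`. -/
def Smat (n : ℕ) : Matrix (Fin n) (Fin n) ℝ :=
  Matrix.of fun i j => if (i : ℕ) + 1 = (j : ℕ) then 1 else 0

/-- The last standard basis vector `g` of `ℝⁿ`. -/
def gvec (n : ℕ) : Fin n → ℝ := fun i => if (i : ℕ) = n - 1 then 1 else 0

/-- `Π = I − g·gᵀ`, the orthogonal projection onto the orthogonal complement of `g`. -/
def Pimat (n : ℕ) : Matrix (Fin n) (Fin n) ℝ := 1 - vecMulVec (gvec n) (gvec n)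

lemma vmv_mulVec {n : ℕ} (a b x : Fin n → ℝ) :
    (vecMulVec a b).mulVec x = (b ⬝ᵥ x) • a := by
  ext i
  simp [mulVec, dotProduct, vecMulVec_apply, Finset.mul_sum, Finset.sum_mul, mul_assoc, mul_comm]
  exact Finset.sum_congr rfl fun l _ => by ring

lemma vmv_transpose {n : ℕ} (a b : Fin n → ℝ) : (vecMulVec a b)ᵀ = vecMulVec b a := by
  ext i j; simp [vecMulVec_apply, mul_comm]

lemma vmv_vmv {n : ℕ} (a b c d : Fin n → ℝ) :
    vecMulVec a b * vecMulVec c d = (b ⬝ᵥ c) • vecMulVec a d := by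
  ext i j
  simp [mul_apply, vecMulVec_apply, dotProduct, Finset.sum_mul, Finset.mul_sum]
  congr 1; ext l; ring

lemma vmv_mulVec_right {n : ℕ} (a b : Fin n → ℝ) (M : Matrix (Fin n) (Fin n) ℝ) :
    vecMulVec a (M.mulVec b) = vecMulVec a b * Mᵀ := by
  ext i j
  simp [mul_apply, vecMulVec_apply, mulVec, dotProduct, Finset.mul_sum, mul_assoc, mul_comm]
  exact Finset.sum_congr rfl fun l _ => by ring

lemma vmv_mulVec_left {n : ℕ} (a b : Fin n → ℝ) (M : Matrix (Fin n) (Fin n) ℝ) :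
    vecMulVec (M.mulVec a) b = M * vecMulVec a b := by
  ext i j
  simp [mul_apply, vecMulVec_apply, mulVec, dotProduct, Finset.sum_mul, mul_assoc]

lemma vmv_add_right {n : ℕ} (a b c : Fin n → ℝ) :
    vecMulVec a (b + c) = vecMulVec a b + vecMulVec a c := by
  ext i j; simp [vecMulVec_apply, mul_add]

lemma vmv_add_left {n : ℕ} (a b c : Fin n → ℝ) :
    vecMulVec (a + b) c = vecMulVec a c + vecMulVec b c := by
  ext i j; simp [vecMulVec_apply, add_mul]

lemma vmv_sub_right {n : ℕ} (a b c : Fin n → ℝ) :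
    vecMulVec a (b - c) = vecMulVec a b - vecMulVec a c := by
  ext i j; simp [vecMulVec_apply, mul_sub]

lemma vmv_sub_left {n : ℕ} (a b c : Fin n → ℝ) :
    vecMulVec (a - b) c = vecMulVec a c - vecMulVec b c := by
  ext i j; simp [vecMulVec_apply, sub_mul]

lemma vmv_smul_right {n : ℕ} (r : ℝ) (a b : Fin n → ℝ) :
    vecMulVec a (r • b) = r • vecMulVec a b := by
  ext i j; simp [vecMulVec_apply]; ring

lemma vmv_smul_left {n : ℕ} (r : ℝ) (a b : Fin n → ℝ) :
    vecMulVec (r • a) b = r • vecMulVec a b := by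
  ext i j; simp [vecMulVec_apply]; ring

lemma gS_zero {n : ℕ} (hn : 0 < n) : vecMulVec (gvec n) (gvec n) * Smat n = 0 := by
  ext i j
  simp only [mul_apply, vecMulVec_apply, Smat, gvec, of_apply, Matrix.zero_apply]
  apply Finset.sum_eq_zero
  intro l _
  by_cases h1 : (l : ℕ) = n - 1
  · have : (l : ℕ) + 1 = n := by omega
    have : ¬ ((l : ℕ) + 1 = (j : ℕ)) := by omega
    simp [this]
  · simp [h1]

lemma Sg_zero {n : ℕ} (hn : 0 < n) : (Smat n)ᵀ * vecMulVec (gvec n) (gvec n) = 0 := by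
  have h := congrArg Matrix.transpose (gS_zero hn)
  rwa [transpose_mul, vmv_transpose, transpose_zero] at h

/-- `P` is the Moore–Penrose pseudoinverse of `M` (the four Penrose conditions). -/
def IsMoorePenroseInv {n : ℕ} (M P : Matrix (Fin n) (Fin n) ℝ) : Prop :=
  M * P * M = M ∧ P * M * P = P ∧ (M * P)ᵀ = M * P ∧ (P * M)ᵀ = P * M

/-- If `Z ≥ 0` satisfies `Π·S·Z·Π + Π·Z·Sᵀ·Π = 0`, `ξ = S·Z·g + Z·h` lies in the range of `Z`,
`⟨h−k, ξ⟩ > 0` and `⟨ξ, Z⁺ξ⟩ ≤ ⟨h−k, ξ⟩`, then with `w = ⟨h−k, ξ⟩^{−1/2}·ξ`, the matrices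
`X' = Z − w·wᵀ` and `Y' = w·wᵀ` satisfy `X' ≥ 0` and the Lyapunov intersection equation
for `A = S + g·hᵀ`, `B = S + g·kᵀ`. -/
theorem Z_with_F_le_one_gives_solution {n : ℕ} (hn : 0 < n) (h k : Fin n → ℝ)
    (Z : Matrix (Fin n) (Fin n) ℝ) (hZ : Z.PosSemidef)
    (h1 : Pimat n * Smat n * Z * Pimat n + Pimat n * Z * (Smat n)ᵀ * Pimat n = 0)
    (ξ : Fin n → ℝ) (hξ : ξ = (Smat n * Z).mulVec (gvec n) + Z.mulVec h)
    (hrange : ∃ y : Fin n → ℝ, Z.mulVec y = ξ)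
    (hpos : 0 < (h - k) ⬝ᵥ ξ)
    (Zp : Matrix (Fin n) (Fin n) ℝ) (hZp : IsMoorePenroseInv Z Zp)
    (hF : ξ ⬝ᵥ Zp.mulVec ξ ≤ (h - k) ⬝ᵥ ξ)
    (w : Fin n → ℝ) (hw : w = (Real.sqrt ((h - k) ⬝ᵥ ξ))⁻¹ • ξ) :
    (Z - vecMulVec w w).PosSemidef ∧
      (Smat n + vecMulVec (gvec n) h) * (Z - vecMulVec w w) +
        (Z - vecMulVec w w) * (Smat n + vecMulVec (gvec n) h)ᵀ +
        (Smat n + vecMulVec (gvec n) k) * vecMulVec w w +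
        vecMulVec w w * (Smat n + vecMulVec (gvec n) k)ᵀ = 0 := by
  set G := vecMulVec (gvec n) (gvec n) with hG
  set c := Real.sqrt ((h - k) ⬝ᵥ ξ) with hc
  have hc0 : 0 < c := Real.sqrt_pos.mpr hpos
  have hc2 : c * c = (h - k) ⬝ᵥ ξ := Real.mul_self_sqrt hpos.le
  have hZt : Zᵀ = Z := hZ.1
  obtain ⟨y, hy⟩ := hrange
  -- symmetry of the quadratic form
  have hvm : ∀ u : Fin n → ℝ, u ᵥ* Z = Z *ᵥ u := by
    intro u; rw [← hZt, vecMul_transpose, hZt]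
  have symm : ∀ u v : Fin n → ℝ, u ⬝ᵥ Z.mulVec v = v ⬝ᵥ Z.mulVec u := by
    intro u v
    rw [dotProduct_mulVec, hvm, dotProduct_comm]
  have hq : ∀ x : Fin n → ℝ, 0 ≤ x ⬝ᵥ Z.mulVec x := by
    intro x
    simpa using hZ.dotProduct_mulVec_nonneg x
  -- ⟨y, Zy⟩ = ⟨ξ, Z⁺ξ⟩
  have hyy : y ⬝ᵥ Z.mulVec y = ξ ⬝ᵥ Zp.mulVec ξ := by
    have e : ξ ⬝ᵥ Zp.mulVec ξ = y ᵥ* (Zᵀ * (Zp * Z)) ⬝ᵥ y := by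
      rw [← hy, mulVec_mulVec, dotProduct_mulVec, vecMul_mulVec]
    rw [e, hZt, ← mul_assoc, hZp.1, hvm, dotProduct_comm]
  have hyx : ∀ x : Fin n → ℝ, ξ ⬝ᵥ x = y ⬝ᵥ Z.mulVec x := by
    intro x
    rw [← hy, dotProduct_mulVec, hvm]
  have hermW : (vecMulVec w w).IsHermitian := by
    rw [IsHermitian]
    ext i j
    simp [conjTranspose_apply, vecMulVec_apply, mul_comm]
  constructor
  · rw [posSemidef_iff_dotProduct_mulVec]; constructor
    · exact hZ.1.sub hermW
    · intro x
      have hx : star x = x := by simp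
      rw [hx, sub_mulVec, dotProduct_sub, vmv_mulVec]
      have hwx : w ⬝ᵥ x = c⁻¹ * (ξ ⬝ᵥ x) := by rw [hw, smul_dotProduct]; rfl
      have hXnn := hq x
      -- Cauchy-Schwarz
      have key : ∀ t : ℝ, 0 ≤ (x ⬝ᵥ Z.mulVec x) * (t * t) + (2 * (y ⬝ᵥ Z.mulVec x)) * t
          + y ⬝ᵥ Z.mulVec y := by
        intro t
        have h0 := hq (t • x + y)
        simp only [mulVec_add, mulVec_smul, dotProduct_add, add_dotProduct, smul_dotProduct,
          dotProduct_smul, smul_eq_mul] at h0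
        rw [symm x y] at h0
        nlinarith [h0]
      have disc := discrim_le_zero key
      rw [discrim] at disc
      have hyyle : y ⬝ᵥ Z.mulVec y ≤ c * c := by rw [hyy, hc2]; exact hF
      have hcs : (y ⬝ᵥ Z.mulVec x) * (y ⬝ᵥ Z.mulVec x) ≤
          (x ⬝ᵥ Z.mulVec x) * (y ⬝ᵥ Z.mulVec y) := by nlinarith [disc]
      have h5 : (ξ ⬝ᵥ x) * (ξ ⬝ᵥ x) ≤ (c * c) * (x ⬝ᵥ Z.mulVec x) := by
        rw [hyx x]
        nlinarith [hcs, mul_le_mul_of_nonneg_left hyyle (hq x), hq x]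
      have h6 : c⁻¹ * c = 1 := inv_mul_cancel₀ hc0.ne'
      have : x ⬝ᵥ ((w ⬝ᵥ x) • w) = (w ⬝ᵥ x) * (w ⬝ᵥ x) := by
        rw [dotProduct_smul, smul_eq_mul, dotProduct_comm]
      rw [this, hwx]
      have h7 : c⁻¹ * c⁻¹ * (c * c * (x ⬝ᵥ Z.mulVec x)) = x ⬝ᵥ Z.mulVec x := by
        field_simp
      nlinarith [h7, mul_le_mul_of_nonneg_left h5 (mul_nonneg (inv_nonneg.mpr hc0.le)
        (inv_nonneg.mpr hc0.le))]
  · -- the Lyapunov equation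
    have hGS := gS_zero hn
    have hSG := Sg_zero hn
    rw [← hG] at hGS hSG
    -- rewrite h1
    have t1 : Pimat n * Smat n = Smat n := by
      rw [Pimat, ← hG, sub_mul, one_mul, hGS, sub_zero]
    have t2 : (Smat n)ᵀ * Pimat n = (Smat n)ᵀ := by
      rw [Pimat, ← hG, mul_sub, mul_one, hSG, sub_zero]
    rw [t1, mul_assoc (Pimat n * Z), t2] at h1
    simp only [Pimat, ← hG, mul_sub, sub_mul, one_mul, mul_one] at h1
    -- scalar facts
    have hkhw : (k - h) ⬝ᵥ w = -c := by
      rw [hw, dotProduct_smul, smul_eq_mul, show (k - h) ⬝ᵥ ξ = -((h - k) ⬝ᵥ ξ) by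
        rw [← neg_dotProduct]; congr 1; abel, ← hc2]
      field_simp
    have hgξ : vecMulVec (gvec n) ξ = G * (Z * (Smat n)ᵀ) + vecMulVec (gvec n) h * Z := by
      rw [hξ, vmv_add_right, vmv_mulVec_right, vmv_mulVec_right, transpose_mul, hZt, ← hG]
    have hξg : vecMulVec ξ (gvec n) = Smat n * Z * G + Z * vecMulVec h (gvec n) := by
      rw [hξ, vmv_add_left, vmv_mulVec_left, vmv_mulVec_left, ← hG]
    have e1 : vecMulVec (gvec n) k * vecMulVec w w =
        vecMulVec (gvec n) h * vecMulVec w w -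
          (G * (Z * (Smat n)ᵀ) + vecMulVec (gvec n) h * Z) := by
      have : vecMulVec (gvec n) (k - h) * vecMulVec w w = -(vecMulVec (gvec n) ξ) := by
        rw [vmv_vmv, hkhw, hw, vmv_smul_right, smul_smul]
        rw [show -c * (Real.sqrt ((h - k) ⬝ᵥ ξ))⁻¹ = -1 by rw [← hc]; field_simp]
        simp
      rw [vmv_sub_right, sub_mul] at this
      rw [← hgξ]
      linear_combination (norm := abel) this
    have e2 : vecMulVec w w * vecMulVec k (gvec n) =
        vecMulVec w w * vecMulVec h (gvec n) -
          (Smat n * Z * G + Z * vecMulVec h (gvec n)) := by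
      have hwk : w ⬝ᵥ (k - h) = -c := by rw [dotProduct_comm]; exact hkhw
      have : vecMulVec w w * vecMulVec (k - h) (gvec n) = -(vecMulVec ξ (gvec n)) := by
        rw [vmv_vmv, hwk, hw, vmv_smul_left, smul_smul]
        rw [show -c * (Real.sqrt ((h - k) ⬝ᵥ ξ))⁻¹ = -1 by rw [← hc]; field_simp]
        simp
      rw [vmv_sub_left, mul_sub] at this
      rw [← hξg]
      linear_combination (norm := abel) this
    have main : (Smat n + vecMulVec (gvec n) h) * (Z - vecMulVec w w) +
        (Z - vecMulVec w w) * (Smat n + vecMulVec (gvec n) h)ᵀ +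
        (Smat n + vecMulVec (gvec n) k) * vecMulVec w w +
        vecMulVec w w * (Smat n + vecMulVec (gvec n) k)ᵀ =
        Smat n * Z - Smat n * Z * G + (Z * (Smat n)ᵀ - G * (Z * (Smat n)ᵀ)) := by
      simp only [transpose_add, vmv_transpose, add_mul, mul_add, mul_sub, sub_mul]
      rw [e1, e2]
      noncomm_ring
    rw [main]
    rw [← h1]
    noncomm_ring
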